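/- For integers l_1 < l_2 < ... < l_k with l_i ≥ i for all i, writing h_A for the Vandermonde product and id = (1,...,k), one has the bound ln(h_A(l)/h_A(id)) ≤ Σ_{i: l_i > i} (l_i + i)(l_i − i). -/

import Mathlib

open Finset Real

/-- Bound on the ratio of Vandermonde determinants: for strictly increasing `l` with
`l_i ≥ i` (1-based), `ln (h_A(l)/h_A(id)) ≤ Σ_{i : l_i > i} (l_i + i)(l_i − i)`. -/
theorem log_vandermonde_ratio_bound (k : ℕ) (l : Fin k → ℕ) (hl : StrictMono l)
    (hge : ∀ i : Fin k, (i : ℕ) + 1 ≤ l i) :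
    Real.log ((∏ i : Fin k, ∏ j ∈ Finset.Ioi i, ((l j : ℝ) - (l i : ℝ))) /
        (∏ i : Fin k, ∏ j ∈ Finset.Ioi i, ((j : ℕ) - (i : ℕ) : ℝ))) ≤
      ∑ i ∈ Finset.univ.filter (fun i : Fin k => (i : ℕ) + 1 < l i),
        ((l i : ℝ) + ((i : ℕ) + 1)) * ((l i : ℝ) - ((i : ℕ) + 1)) := by
  have hA : ∀ i : Fin k, ∀ j ∈ Finset.Ioi i, (0:ℝ) < (l j : ℝ) - (l i : ℝ) := by
    intro i j hj
    rw [Finset.mem_Ioi] at hj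
    have h1 : l i < l j := hl hj
    have : (l i : ℝ) < (l j : ℝ) := by exact_mod_cast h1
    linarith
  have hB : ∀ i : Fin k, ∀ j ∈ Finset.Ioi i, (0:ℝ) < ((j:ℕ) : ℝ) - ((i:ℕ) : ℝ) := by
    intro i j hj
    rw [Finset.mem_Ioi] at hj
    have h1 : (i:ℕ) < (j:ℕ) := hj
    have : ((i:ℕ) : ℝ) < ((j:ℕ) : ℝ) := by exact_mod_cast h1
    linarith
  have hAne : ∀ i : Fin k, ∀ j ∈ Finset.Ioi i, ((l j : ℝ) - (l i : ℝ)) ≠ 0 :=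
    fun i j hj => (hA i j hj).ne'
  have hBne : ∀ i : Fin k, ∀ j ∈ Finset.Ioi i, (((j:ℕ) : ℝ) - ((i:ℕ) : ℝ)) ≠ 0 :=
    fun i j hj => (hB i j hj).ne'
  have e1 : Real.log (∏ i : Fin k, ∏ j ∈ Finset.Ioi i, ((l j : ℝ) - (l i : ℝ)))
      = ∑ i : Fin k, ∑ j ∈ Finset.Ioi i, Real.log ((l j : ℝ) - (l i : ℝ)) := by
    rw [Real.log_prod (fun i _ => Finset.prod_ne_zero_iff.mpr (hAne i))]
    exact Finset.sum_congr rfl fun i _ => Real.log_prod (hAne i)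
  have e2 : Real.log (∏ i : Fin k, ∏ j ∈ Finset.Ioi i, (((j:ℕ) : ℝ) - ((i:ℕ) : ℝ)))
      = ∑ i : Fin k, ∑ j ∈ Finset.Ioi i, Real.log (((j:ℕ) : ℝ) - ((i:ℕ) : ℝ)) := by
    rw [Real.log_prod (fun i _ => Finset.prod_ne_zero_iff.mpr (hBne i))]
    exact Finset.sum_congr rfl fun i _ => Real.log_prod (hBne i)
  rw [Real.log_div (Finset.prod_ne_zero_iff.mpr fun i _ =>
        Finset.prod_ne_zero_iff.mpr (hAne i))
      (Finset.prod_ne_zero_iff.mpr fun i _ => Finset.prod_ne_zero_iff.mpr (hBne i)),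
    e1, e2, ← Finset.sum_sub_distrib]
  have step1 : ∑ i : Fin k, (∑ j ∈ Finset.Ioi i, Real.log ((l j : ℝ) - (l i : ℝ))
        - ∑ j ∈ Finset.Ioi i, Real.log (((j:ℕ) : ℝ) - ((i:ℕ) : ℝ)))
      ≤ ∑ i : Fin k, ∑ j ∈ Finset.Ioi i, Real.log ((l j : ℝ) - ((j:ℕ) : ℝ)) := by
    apply Finset.sum_le_sum
    intro i _
    rw [← Finset.sum_sub_distrib]
    apply Finset.sum_le_sum
    intro j hj
    have hij0 : i < j := Finset.mem_Ioi.mp hj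
    have hij : (i:ℕ) < (j:ℕ) := hij0
    have hij' : ((i:ℕ) : ℝ) + 1 ≤ ((j:ℕ) : ℝ) := by exact_mod_cast hij
    have hgi : ((i:ℕ) : ℝ) + 1 ≤ (l i : ℝ) := by exact_mod_cast hge i
    have hgj : ((j:ℕ) : ℝ) + 1 ≤ (l j : ℝ) := by exact_mod_cast hge j
    have hxpos : (0:ℝ) < (l j : ℝ) - ((j:ℕ) : ℝ) := by linarith
    have key : (l j : ℝ) - (l i : ℝ)
        ≤ ((l j : ℝ) - ((j:ℕ) : ℝ)) * (((j:ℕ) : ℝ) - ((i:ℕ) : ℝ)) := by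
      nlinarith [mul_nonneg (by linarith : (0:ℝ) ≤ (l j : ℝ) - ((j:ℕ):ℝ) - 1)
        (by linarith : (0:ℝ) ≤ ((j:ℕ):ℝ) - ((i:ℕ):ℝ) - 1)]
    have := Real.log_le_log (hA i j hj) key
    rw [Real.log_mul hxpos.ne' (hB i j hj).ne'] at this
    linarith
  refine step1.trans ?_
  have swap : ∑ i : Fin k, ∑ j ∈ Finset.Ioi i, Real.log ((l j : ℝ) - ((j:ℕ) : ℝ))
      = ∑ j : Fin k, ∑ i ∈ Finset.Iio j, Real.log ((l j : ℝ) - ((j:ℕ) : ℝ)) := by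
    apply Finset.sum_comm'
    intro i j
    simp [Finset.mem_Ioi, Finset.mem_Iio]
  rw [swap]
  rw [Finset.sum_filter]
  apply Finset.sum_le_sum
  intro j _
  rw [Finset.sum_const, Fin.card_Iio, nsmul_eq_mul]
  have hgj : ((j:ℕ) : ℝ) + 1 ≤ (l j : ℝ) := by exact_mod_cast hge j
  have hxpos : (0:ℝ) < (l j : ℝ) - ((j:ℕ) : ℝ) := by linarith
  have hlog : Real.log ((l j : ℝ) - ((j:ℕ) : ℝ)) ≤ (l j : ℝ) - ((j:ℕ) : ℝ) - 1 :=
    Real.log_le_sub_one_of_pos hxpos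
  have hjnn : (0:ℝ) ≤ ((j:ℕ) : ℝ) := Nat.cast_nonneg _
  by_cases h : (j:ℕ) + 1 < l j
  · simp only [h, if_true]
    have h' : ((j:ℕ) : ℝ) + 1 < (l j : ℝ) := by exact_mod_cast h
    have h1 : ((j:ℕ) : ℝ) * Real.log ((l j : ℝ) - ((j:ℕ) : ℝ))
        ≤ ((j:ℕ) : ℝ) * ((l j : ℝ) - ((j:ℕ) : ℝ) - 1) :=
      mul_le_mul_of_nonneg_left hlog hjnn
    nlinarith
  · simp only [h, if_false]
    have h' : l j = (j:ℕ) + 1 := le_antisymm (not_lt.mp h) (hge j)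
    have : (l j : ℝ) - ((j:ℕ) : ℝ) = 1 := by
      rw [h']; push_cast; ring
    rw [this, Real.log_one, mul_zero]
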